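/- arXiv:1211.7050 — 2 statements merged into one kernel-verified Lean document; each statement's English description precedes it below -/
import Mathlib

section
/- Define Σ₀ to be the set of nonzero skew-symmetric real 4×4 matrices σ with electric part e and magnetic part m satisfying ‖e‖ = ‖m‖ and e·m = 0. The action of the full Lorentz group O(1,3) on Σ₀ given by σ ↦ Λ σ Λᵀ is transitive. -/
open Matrix

noncomputable section

def eta : Matrix (Fin 4) (Fin 4) ℝ := Matrix.diagonal ![1, -1, -1, -1]

/-- The full Lorentz group O(1,3): Λᵀ η Λ = η. -/
def IsLorentz (Λ : Matrix (Fin 4) (Fin 4) ℝ) : Prop := Λᵀ * eta * Λ = eta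

/-- Electric part of a skew-symmetric 4×4 matrix: e_k = σ_{0k}. -/
def eVec (σ : Matrix (Fin 4) (Fin 4) ℝ) : Fin 3 → ℝ := ![σ 0 1, σ 0 2, σ 0 3]

/-- Magnetic part: m₁ = σ_{23}, m₂ = σ_{31}, m₃ = σ_{12}. -/
def mVec (σ : Matrix (Fin 4) (Fin 4) ℝ) : Fin 3 → ℝ := ![σ 2 3, σ 3 1, σ 1 2]

/-- Σ₀: nonzero skew-symmetric matrices with ‖e‖ = ‖m‖ and e·m = 0. -/
def InSigma0 (σ : Matrix (Fin 4) (Fin 4) ℝ) : Prop :=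
  σᵀ = -σ ∧ σ ≠ 0 ∧ (∑ i, eVec σ i ^ 2) = (∑ i, mVec σ i ^ 2) ∧
    (∑ i, eVec σ i * mVec σ i) = 0

set_option maxHeartbeats 2000000

lemma eta_lit : eta = !![1,0,0,0; 0,-1,0,0; 0,0,-1,0; 0,0,0,-1] := by
  unfold eta
  ext i j
  fin_cases i <;> fin_cases j <;> simp [Matrix.diagonal, Matrix.vecHead, Matrix.vecTail]

lemma eta_sq : eta * eta = 1 := by
  ext i j
  fin_cases i <;> fin_cases j <;>
    simp [eta, Matrix.mul_apply, Matrix.diagonal, Matrix.one_apply, Fin.sum_univ_four]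

lemma IsLorentz.mul {A B : Matrix (Fin 4) (Fin 4) ℝ} (hA : IsLorentz A) (hB : IsLorentz B) :
    IsLorentz (A * B) := by
  unfold IsLorentz at *
  rw [Matrix.transpose_mul]
  calc Bᵀ * Aᵀ * eta * (A * B) = Bᵀ * (Aᵀ * eta * A) * B := by
        simp only [Matrix.mul_assoc]
    _ = eta := by rw [hA, hB]

/-- explicit inverse of a Lorentz matrix -/
def invL (Λ : Matrix (Fin 4) (Fin 4) ℝ) : Matrix (Fin 4) (Fin 4) ℝ := eta * Λᵀ * eta

lemma invL_mul {Λ : Matrix (Fin 4) (Fin 4) ℝ} (h : IsLorentz Λ) : invL Λ * Λ = 1 := by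
  unfold IsLorentz at h
  unfold invL
  calc eta * Λᵀ * eta * Λ = eta * (Λᵀ * eta * Λ) := by simp only [Matrix.mul_assoc]
    _ = eta * eta := by rw [h]
    _ = 1 := eta_sq

lemma mul_invL {Λ : Matrix (Fin 4) (Fin 4) ℝ} (h : IsLorentz Λ) : Λ * invL Λ = 1 :=
  mul_eq_one_comm.mp (invL_mul h)

lemma eta_symm : etaᵀ = eta := by simp [eta]

lemma lorentz_eta_self {Λ : Matrix (Fin 4) (Fin 4) ℝ} (h : IsLorentz Λ) :
    Λ * eta * Λᵀ = eta := by
  have h1 := mul_invL h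
  unfold invL at h1
  have h2 : Λ * eta * Λᵀ * eta * eta = 1 * eta := by
    rw [← h1]; simp only [Matrix.mul_assoc]
  rw [Matrix.mul_assoc _ eta eta, eta_sq, Matrix.mul_one, Matrix.one_mul] at h2
  exact h2

lemma IsLorentz.invL {Λ : Matrix (Fin 4) (Fin 4) ℝ} (h : IsLorentz Λ) :
    IsLorentz (invL Λ) := by
  unfold IsLorentz _root_.invL
  simp only [Matrix.transpose_mul, eta_symm, Matrix.transpose_transpose]
  calc eta * (Λ * eta) * eta * (eta * Λᵀ * eta)
      = eta * (Λ * (eta * ((eta * eta) * Λᵀ) * eta)) := by simp only [Matrix.mul_assoc]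
    _ = eta * ((Λ * eta * Λᵀ) * eta) := by
        rw [eta_sq]; simp only [Matrix.one_mul, Matrix.mul_assoc]
    _ = eta := by rw [lorentz_eta_self h, ← Matrix.mul_assoc, eta_sq, Matrix.one_mul]

/-- Canonical null field of strength a: e = (a,0,0), m = (0,a,0). -/
def sigCan (a : ℝ) : Matrix (Fin 4) (Fin 4) ℝ :=
  !![0, a, 0, 0; -a, 0, 0, -a; 0, 0, 0, 0; 0, a, 0, 0]

/-- Boost along the z-axis with Doppler factor a. -/
def boostM (a : ℝ) : Matrix (Fin 4) (Fin 4) ℝ :=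
  !![(a^2+1)/(2*a), 0, 0, (a^2-1)/(2*a); 0, 1, 0, 0; 0, 0, 1, 0;
     (a^2-1)/(2*a), 0, 0, (a^2+1)/(2*a)]

lemma boost_transpose (a : ℝ) : (boostM a)ᵀ = boostM a := by
  unfold boostM
  ext i j
  fin_cases i <;> fin_cases j <;> simp [Matrix.vecHead, Matrix.vecTail]

lemma boost_lorentz {a : ℝ} (ha : a ≠ 0) : IsLorentz (boostM a) := by
  unfold IsLorentz
  rw [boost_transpose, eta_lit]
  unfold boostM
  ext i j
  fin_cases i <;> fin_cases j <;>
    · simp [Matrix.mul_apply, Fin.sum_univ_four, Matrix.vecHead, Matrix.vecTail]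
      try norm_num
      try field_simp
      try ring

lemma boost_conj {a : ℝ} (ha : a ≠ 0) :
    boostM a * sigCan 1 * (boostM a)ᵀ = sigCan a := by
  rw [boost_transpose]
  unfold boostM sigCan
  ext i j
  fin_cases i <;> fin_cases j <;>
    · simp [Matrix.mul_apply, Fin.sum_univ_four, Matrix.vecHead, Matrix.vecTail]
      try norm_num
      try field_simp
      try ring

/-- Rotation (as spatial block) sending the x-axis to e/a, the y-axis to m/a,
the z-axis to (e×m)/a². -/
def rotM (e1 e2 e3 m1 m2 m3 a : ℝ) : Matrix (Fin 4) (Fin 4) ℝ :=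
  !![1, 0, 0, 0;
     0, e1/a, m1/a, (e2*m3 - e3*m2)/a^2;
     0, e2/a, m2/a, (e3*m1 - e1*m3)/a^2;
     0, e3/a, m3/a, (e1*m2 - e2*m1)/a^2]

lemma rot_transpose (e1 e2 e3 m1 m2 m3 a : ℝ) :
    (rotM e1 e2 e3 m1 m2 m3 a)ᵀ =
    !![1, 0, 0, 0;
       0, e1/a, e2/a, e3/a;
       0, m1/a, m2/a, m3/a;
       0, (e2*m3 - e3*m2)/a^2, (e3*m1 - e1*m3)/a^2, (e1*m2 - e2*m1)/a^2] := by
  unfold rotM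
  ext i j
  fin_cases i <;> fin_cases j <;> simp [Matrix.vecHead, Matrix.vecTail]

lemma rot_lorentz {e1 e2 e3 m1 m2 m3 a : ℝ} (ha : a ≠ 0)
    (ha2 : a^2 = e1^2+e2^2+e3^2) (hm : e1^2+e2^2+e3^2 = m1^2+m2^2+m3^2)
    (hp : e1*m1+e2*m2+e3*m3 = 0) : IsLorentz (rotM e1 e2 e3 m1 m2 m3 a) := by
  unfold IsLorentz
  rw [rot_transpose, eta_lit]
  unfold rotM
  ext i j
  fin_cases i <;> fin_cases j <;>
    simp [Matrix.mul_apply, Fin.sum_univ_four, Matrix.vecHead, Matrix.vecTail]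
  all_goals try field_simp
  all_goals try ring
  all_goals try linear_combination a^4 * ha2
  all_goals try linear_combination (-(a^4)) * hp
  all_goals try linear_combination a^4 * ha2 + a^4 * hm
  all_goals try linear_combination a^8*(a^2+e1^2+e2^2+e3^2) * ha2 +
    a^8*(e1^2+e2^2+e3^2) * hm + a^8*(e1*m1+e2*m2+e3*m3) * hp
  all_goals try linear_combination ha2
  all_goals try linear_combination (-1) * hp
  all_goals try linear_combination ha2 + hm
  all_goals try linear_combination (a^2+e1^2+e2^2+e3^2) * ha2 +
    (e1^2+e2^2+e3^2) * hm + (e1*m1+e2*m2+e3*m3) * hp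

lemma rot_conj {e1 e2 e3 m1 m2 m3 a : ℝ} (ha : a ≠ 0)
    (ha2 : a^2 = e1^2+e2^2+e3^2) (hm : e1^2+e2^2+e3^2 = m1^2+m2^2+m3^2)
    (hp : e1*m1+e2*m2+e3*m3 = 0) :
    rotM e1 e2 e3 m1 m2 m3 a * sigCan a * (rotM e1 e2 e3 m1 m2 m3 a)ᵀ =
    !![0, e1, e2, e3; -e1, 0, m3, -m2; -e2, -m3, 0, m1; -e3, m2, -m1, 0] := by
  rw [rot_transpose]
  unfold rotM sigCan
  ext i j
  fin_cases i <;> fin_cases j <;>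
    simp [Matrix.mul_apply, Fin.sum_univ_four, Matrix.vecHead, Matrix.vecTail]
  all_goals try field_simp
  all_goals try ring
  all_goals try linear_combination (-(m1*a^3))*ha2 + (-(e1*a^3))*hp
  all_goals try linear_combination (m1*a^3)*ha2 + (e1*a^3)*hp
  all_goals try linear_combination (-(m2*a^3))*ha2 + (-(e2*a^3))*hp
  all_goals try linear_combination (m2*a^3)*ha2 + (e2*a^3)*hp
  all_goals try linear_combination (-(m3*a^3))*ha2 + (-(e3*a^3))*hp
  all_goals try linear_combination (m3*a^3)*ha2 + (e3*a^3)*hp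
  all_goals try linear_combination (-m1)*ha2 + (-e1)*hp
  all_goals try linear_combination m1*ha2 + e1*hp
  all_goals try linear_combination (-m2)*ha2 + (-e2)*hp
  all_goals try linear_combination m2*ha2 + e2*hp
  all_goals try linear_combination (-m3)*ha2 + (-e3)*hp
  all_goals try linear_combination m3*ha2 + e3*hp

/-- Any σ ∈ Σ₀ is an explicit matrix built from its electric and magnetic parts. -/
lemma sigma_rep {σ : Matrix (Fin 4) (Fin 4) ℝ} (hskew : σᵀ = -σ) :
    σ = !![0, σ 0 1, σ 0 2, σ 0 3;
           -(σ 0 1), 0, σ 1 2, -(σ 3 1);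
           -(σ 0 2), -(σ 1 2), 0, σ 2 3;
           -(σ 0 3), σ 3 1, -(σ 2 3), 0] := by
  have hs : ∀ i j, σ j i = -σ i j := by
    intro i j
    have := congrFun (congrFun hskew i) j
    simpa [Matrix.transpose_apply] using this
  ext i j
  fin_cases i <;> fin_cases j <;>
    simp [Matrix.vecHead, Matrix.vecTail] <;>
    linarith [hs 0 0, hs 1 1, hs 2 2, hs 3 3, hs 0 1, hs 0 2, hs 0 3,
      hs 1 2, hs 1 3, hs 2 3, hs 3 1]

/-- Key lemma: every element of Σ₀ is in the orbit of the canonical null field. -/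
lemma key {σ : Matrix (Fin 4) (Fin 4) ℝ} (h : InSigma0 σ) :
    ∃ Λ : Matrix (Fin 4) (Fin 4) ℝ, IsLorentz Λ ∧ Λ * sigCan 1 * Λᵀ = σ := by
  obtain ⟨hskew, hne, hnorm, hperp⟩ := h
  set e1 := σ 0 1 with he1
  set e2 := σ 0 2 with he2
  set e3 := σ 0 3 with he3
  set m1 := σ 2 3 with hm1
  set m2 := σ 3 1 with hm2
  set m3 := σ 1 2 with hm3
  have hnorm' : e1^2+e2^2+e3^2 = m1^2+m2^2+m3^2 := by
    simpa [eVec, mVec, Fin.sum_univ_three] using hnorm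
  have hperp' : e1*m1+e2*m2+e3*m3 = 0 := by
    simpa [eVec, mVec, Fin.sum_univ_three] using hperp
  have hrep := sigma_rep hskew
  rw [← he1, ← he2, ← he3, ← hm1, ← hm2, ← hm3] at hrep
  have hE : e1^2+e2^2+e3^2 ≠ 0 := by
    intro h0
    apply hne
    have h1 : e1 = 0 := by nlinarith [sq_nonneg e1, sq_nonneg e2, sq_nonneg e3]
    have h2 : e2 = 0 := by nlinarith [sq_nonneg e1, sq_nonneg e2, sq_nonneg e3]
    have h3 : e3 = 0 := by nlinarith [sq_nonneg e1, sq_nonneg e2, sq_nonneg e3]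
    have h0' : m1^2+m2^2+m3^2 = 0 := by linarith
    have h4 : m1 = 0 := by nlinarith [sq_nonneg m1, sq_nonneg m2, sq_nonneg m3]
    have h5 : m2 = 0 := by nlinarith [sq_nonneg m1, sq_nonneg m2, sq_nonneg m3]
    have h6 : m3 = 0 := by nlinarith [sq_nonneg m1, sq_nonneg m2, sq_nonneg m3]
    rw [hrep, h1, h2, h3, h4, h5, h6]
    ext i j
    fin_cases i <;> fin_cases j <;> simp [Matrix.vecHead, Matrix.vecTail]
  set a := Real.sqrt (e1^2+e2^2+e3^2) with hadef
  have hEpos : 0 < e1^2+e2^2+e3^2 :=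
    lt_of_le_of_ne (by positivity) (Ne.symm hE)
  have hapos : 0 < a := Real.sqrt_pos.mpr hEpos
  have ha : a ≠ 0 := ne_of_gt hapos
  have ha2 : a^2 = e1^2+e2^2+e3^2 := Real.sq_sqrt (le_of_lt hEpos)
  refine ⟨rotM e1 e2 e3 m1 m2 m3 a * boostM a,
    (rot_lorentz ha ha2 hnorm' hperp').mul (boost_lorentz ha), ?_⟩
  rw [Matrix.transpose_mul]
  calc rotM e1 e2 e3 m1 m2 m3 a * boostM a * sigCan 1 *
        ((boostM a)ᵀ * (rotM e1 e2 e3 m1 m2 m3 a)ᵀ)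
      = rotM e1 e2 e3 m1 m2 m3 a * (boostM a * sigCan 1 * (boostM a)ᵀ) *
        (rotM e1 e2 e3 m1 m2 m3 a)ᵀ := by simp only [Matrix.mul_assoc]
    _ = rotM e1 e2 e3 m1 m2 m3 a * sigCan a * (rotM e1 e2 e3 m1 m2 m3 a)ᵀ := by
        rw [boost_conj ha]
    _ = σ := by rw [rot_conj ha ha2 hnorm' hperp', ← hrep]

/-- The action σ ↦ Λ σ Λᵀ of the full Lorentz group O(1,3) on Σ₀ is transitive. -/
theorem stmt2 (σ₀ σ : Matrix (Fin 4) (Fin 4) ℝ)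
    (h₀ : InSigma0 σ₀) (h : InSigma0 σ) :
    ∃ Λ : Matrix (Fin 4) (Fin 4) ℝ, IsLorentz Λ ∧ Λ * σ₀ * Λᵀ = σ := by
  obtain ⟨Λ₀, hΛ₀, hc₀⟩ := key h₀
  obtain ⟨Λ₁, hΛ₁, hc₁⟩ := key h
  refine ⟨Λ₁ * invL Λ₀, hΛ₁.mul hΛ₀.invL, ?_⟩
  have hinv : invL Λ₀ * σ₀ * (invL Λ₀)ᵀ = sigCan 1 := by
    rw [← hc₀]
    have h1 : invL Λ₀ * Λ₀ = 1 := invL_mul hΛ₀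
    have h2 : Λ₀ᵀ * (invL Λ₀)ᵀ = 1 := by
      rw [← Matrix.transpose_mul, invL_mul hΛ₀, Matrix.transpose_one]
    calc invL Λ₀ * (Λ₀ * sigCan 1 * Λ₀ᵀ) * (invL Λ₀)ᵀ
        = (invL Λ₀ * Λ₀) * sigCan 1 * (Λ₀ᵀ * (invL Λ₀)ᵀ) := by
          simp only [Matrix.mul_assoc]
      _ = sigCan 1 := by rw [h1, h2, Matrix.one_mul, Matrix.mul_one]
  rw [Matrix.transpose_mul]
  calc Λ₁ * invL Λ₀ * σ₀ * ((invL Λ₀)ᵀ * Λ₁ᵀ)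
      = Λ₁ * (invL Λ₀ * σ₀ * (invL Λ₀)ᵀ) * Λ₁ᵀ := by simp only [Matrix.mul_assoc]
    _ = Λ₁ * sigCan 1 * Λ₁ᵀ := by rw [hinv]
    _ = σ := hc₁
end
end

section
/- Let B_β be the Lorentz boost with velocity β ∈ (−1,1) along the direction n = e₀ × m₀ / ‖e₀ × m₀‖, where σ₀ ∈ Σ₀ has electric part e₀ and magnetic part m₀ (orthogonal and of equal nonzero norm). Then B_β σ₀ B_βᵀ = √((1−β)/(1+β)) · σ₀; i.e., boosting along e₀ × m₀ rescales σ₀ by the Doppler factor λ_β = √((1−β)/(1+β)). -/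
set_option maxHeartbeats 1000000


open Matrix

noncomputable section

/-- Boosting σ₀ ∈ Σ₀ along the direction n = e₀ × m₀ / ‖e₀ × m₀‖ with velocity β
rescales it by the Doppler factor λ_β = √((1−β)/(1+β)): B_β σ₀ B_βᵀ = λ_β • σ₀. -/
theorem stmt6 (σ₀ : Matrix (Fin 4) (Fin 4) ℝ) (e₀ m₀ : Fin 3 → ℝ)
    (hskew : σ₀ᵀ = -σ₀) (he : eVec σ₀ = e₀) (hm : mVec σ₀ = m₀)
    (hnorm : (∑ i, e₀ i ^ 2) = ∑ i, m₀ i ^ 2)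
    (hne : (∑ i, e₀ i ^ 2) ≠ 0)
    (horth : (∑ i, e₀ i * m₀ i) = 0)
    (β : ℝ) (hβ : β ∈ Set.Ioo (-1 : ℝ) 1)
    (c : Fin 3 → ℝ)
    (hc : c = ![e₀ 1 * m₀ 2 - e₀ 2 * m₀ 1,
                e₀ 2 * m₀ 0 - e₀ 0 * m₀ 2,
                e₀ 0 * m₀ 1 - e₀ 1 * m₀ 0])
    (n : Fin 3 → ℝ) (hn : n = fun i => c i / Real.sqrt (∑ j, c j ^ 2))
    (γ : ℝ) (hγ : γ = 1 / Real.sqrt (1 - β ^ 2))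
    (B : Matrix (Fin 4) (Fin 4) ℝ)
    (hB : B = !![γ, -γ * β * n 0, -γ * β * n 1, -γ * β * n 2;
                 -γ * β * n 0, 1 + (γ - 1) * n 0 * n 0, (γ - 1) * n 0 * n 1, (γ - 1) * n 0 * n 2;
                 -γ * β * n 1, (γ - 1) * n 1 * n 0, 1 + (γ - 1) * n 1 * n 1, (γ - 1) * n 1 * n 2;
                 -γ * β * n 2, (γ - 1) * n 2 * n 0, (γ - 1) * n 2 * n 1, 1 + (γ - 1) * n 2 * n 2]) :
    B * σ₀ * Bᵀ = Real.sqrt ((1 - β) / (1 + β)) • σ₀ := by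
  obtain ⟨hβ1, hβ2⟩ := hβ
  have ha : (0:ℝ) < 1 - β := by linarith
  have hb : (0:ℝ) < 1 + β := by linarith
  have hlam : Real.sqrt ((1 - β) / (1 + β)) = γ * (1 - β) := by
    have hsq : Real.sqrt (1 - β ^ 2) = Real.sqrt (1 - β) * Real.sqrt (1 + β) := by
      rw [← Real.sqrt_mul ha.le]; ring_nf
    have h3 : Real.sqrt (1-β) * Real.sqrt (1-β) = 1-β := Real.mul_self_sqrt ha.le
    rw [hγ, hsq, Real.sqrt_div ha.le]
    have hbp := Real.sqrt_pos.2 hb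
    have hap := Real.sqrt_pos.2 ha
    field_simp
    linear_combination h3
  have hE3 : (∑ i, e₀ i ^ 2) = e₀ 0^2 + e₀ 1^2 + e₀ 2^2 := by
    simp [Fin.sum_univ_three]
  have hnorm' : e₀ 0^2 + e₀ 1^2 + e₀ 2^2 = m₀ 0^2 + m₀ 1^2 + m₀ 2^2 := by
    rw [← hE3, hnorm]; simp [Fin.sum_univ_three]
  have horth' : e₀ 0 * m₀ 0 + e₀ 1 * m₀ 1 + e₀ 2 * m₀ 2 = 0 := by
    rw [← horth]; simp [Fin.sum_univ_three]
  have hEne : e₀ 0^2 + e₀ 1^2 + e₀ 2^2 ≠ 0 := hE3 ▸ hne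
  have hEpos : (0:ℝ) < e₀ 0^2 + e₀ 1^2 + e₀ 2^2 :=
    lt_of_le_of_ne (by positivity) (Ne.symm hEne)
  subst hc
  have hcs : Real.sqrt (∑ j, (![e₀ 1 * m₀ 2 - e₀ 2 * m₀ 1,
      e₀ 2 * m₀ 0 - e₀ 0 * m₀ 2, e₀ 0 * m₀ 1 - e₀ 1 * m₀ 0] : Fin 3 → ℝ) j ^ 2)
      = e₀ 0^2 + e₀ 1^2 + e₀ 2^2 := by
    have h : (∑ j, (![e₀ 1 * m₀ 2 - e₀ 2 * m₀ 1,
        e₀ 2 * m₀ 0 - e₀ 0 * m₀ 2, e₀ 0 * m₀ 1 - e₀ 1 * m₀ 0] : Fin 3 → ℝ) j ^ 2)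
        = (e₀ 0^2 + e₀ 1^2 + e₀ 2^2)^2 := by
      simp [Fin.sum_univ_three]
      linear_combination (-(e₀ 0^2 + e₀ 1^2 + e₀ 2^2)) * hnorm'
        - (e₀ 0 * m₀ 0 + e₀ 1 * m₀ 1 + e₀ 2 * m₀ 2) * horth'
    rw [h, Real.sqrt_sq hEpos.le]
  have hn' : ∀ i, n i = (![e₀ 1 * m₀ 2 - e₀ 2 * m₀ 1,
      e₀ 2 * m₀ 0 - e₀ 0 * m₀ 2, e₀ 0 * m₀ 1 - e₀ 1 * m₀ 0] : Fin 3 → ℝ) i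
      / (e₀ 0^2 + e₀ 1^2 + e₀ 2^2) := by
    intro i; simp only [hn, hcs]
  have hn0 : n 0 = (e₀ 1 * m₀ 2 - e₀ 2 * m₀ 1) / (e₀ 0^2 + e₀ 1^2 + e₀ 2^2) := by
    rw [hn' 0]; norm_num
  have hn1 : n 1 = (e₀ 2 * m₀ 0 - e₀ 0 * m₀ 2) / (e₀ 0^2 + e₀ 1^2 + e₀ 2^2) := by
    rw [hn' 1]; norm_num
  have hn2 : n 2 = (e₀ 0 * m₀ 1 - e₀ 1 * m₀ 0) / (e₀ 0^2 + e₀ 1^2 + e₀ 2^2) := by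
    rw [hn' 2]; norm_num [Matrix.cons_val_two]
  have hwe : n 0 * e₀ 0 + n 1 * e₀ 1 + n 2 * e₀ 2 = 0 := by
    rw [hn0, hn1, hn2]; field_simp; ring
  have hR0 : n 1 * m₀ 2 - n 2 * m₀ 1 = -e₀ 0 := by
    rw [hn1, hn2]; field_simp
    linear_combination m₀ 0 * horth' + e₀ 0 * hnorm'
  have hR1 : n 2 * m₀ 0 - n 0 * m₀ 2 = -e₀ 1 := by
    rw [hn0, hn2]; field_simp
    linear_combination m₀ 1 * horth' + e₀ 1 * hnorm'
  have hR2 : n 0 * m₀ 1 - n 1 * m₀ 0 = -e₀ 2 := by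
    rw [hn0, hn1]; field_simp
    linear_combination m₀ 2 * horth' + e₀ 2 * hnorm'
  have hS0 : n 1 * e₀ 2 - n 2 * e₀ 1 = m₀ 0 := by
    rw [hn1, hn2]; field_simp
    linear_combination (-e₀ 0) * horth'
  have hS1 : n 2 * e₀ 0 - n 0 * e₀ 2 = m₀ 1 := by
    rw [hn0, hn2]; field_simp
    linear_combination (-e₀ 1) * horth'
  have hS2 : n 0 * e₀ 1 - n 1 * e₀ 0 = m₀ 2 := by
    rw [hn0, hn1]; field_simp
    linear_combination (-e₀ 2) * horth'
  have hsk : ∀ i j, σ₀ j i = -σ₀ i j := fun i j => by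
    have := congrFun (congrFun hskew i) j; simpa using this
  have hσ : σ₀ = !![0, e₀ 0, e₀ 1, e₀ 2; -e₀ 0, 0, m₀ 2, -m₀ 1;
                    -e₀ 1, -m₀ 2, 0, m₀ 0; -e₀ 2, m₀ 1, -m₀ 0, 0] := by
    have d : ∀ i, σ₀ i i = 0 := fun i => by have := hsk i i; linarith
    have e1 : σ₀ 0 1 = e₀ 0 := by simpa [eVec] using congrFun he 0
    have e2 : σ₀ 0 2 = e₀ 1 := by simpa [eVec] using congrFun he 1
    have e3 : σ₀ 0 3 = e₀ 2 := by simpa [eVec] using congrFun he 2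
    have m1 : σ₀ 2 3 = m₀ 0 := by simpa [mVec] using congrFun hm 0
    have m2 : σ₀ 3 1 = m₀ 1 := by simpa [mVec] using congrFun hm 1
    have m3 : σ₀ 1 2 = m₀ 2 := by simpa [mVec] using congrFun hm 2
    have e1' : σ₀ 1 0 = -e₀ 0 := by rw [hsk 0 1, e1]
    have e2' : σ₀ 2 0 = -e₀ 1 := by rw [hsk 0 2, e2]
    have e3' : σ₀ 3 0 = -e₀ 2 := by rw [hsk 0 3, e3]
    have m1' : σ₀ 3 2 = -m₀ 0 := by rw [hsk 2 3, m1]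
    have m2' : σ₀ 1 3 = -m₀ 1 := by rw [hsk 3 1, m2]
    have m3' : σ₀ 2 1 = -m₀ 2 := by rw [hsk 1 2, m3]
    ext i j
    fin_cases i <;> fin_cases j <;>
      simp [d, e1, e2, e3, m1, m2, m3, e1', e2', e3', m1', m2', m3']
  have hBt : Bᵀ = B := by
    rw [hB]; ext i j; fin_cases i <;> fin_cases j <;> simp [Matrix.transpose_apply] <;> ring
  rw [hlam, hσ, hBt, hB]
  ext i j
  fin_cases i <;> fin_cases j <;>
    simp [Matrix.mul_apply, Fin.sum_univ_four, Matrix.transpose_apply, Matrix.smul_apply]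
  · ring
  · linear_combination ((γ^2 - γ - γ^2*β^2) * n 0) * hwe + (γ*β) * hR0
  · linear_combination ((γ^2 - γ - γ^2*β^2) * n 1) * hwe + (γ*β) * hR1
  · linear_combination ((γ^2 - γ - γ^2*β^2) * n 2) * hwe + (γ*β) * hR2
  · linear_combination (-(γ^2 - γ - γ^2*β^2) * n 0) * hwe - (γ*β) * hR0
  · ring
  · linear_combination ((γ-1) * n 1) * hR0 - ((γ-1) * n 0) * hR1 + (γ - γ*β - 1) * hS2
  · linear_combination ((γ-1) * n 2) * hR0 - ((γ-1) * n 0) * hR2 - (γ - γ*β - 1) * hS1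
  · linear_combination (-(γ^2 - γ - γ^2*β^2) * n 1) * hwe - (γ*β) * hR1
  · linear_combination (-(γ-1) * n 1) * hR0 + ((γ-1) * n 0) * hR1 - (γ - γ*β - 1) * hS2
  · ring
  · linear_combination ((γ-1) * n 2) * hR1 - ((γ-1) * n 1) * hR2 + (γ - γ*β - 1) * hS0
  · linear_combination (-(γ^2 - γ - γ^2*β^2) * n 2) * hwe - (γ*β) * hR2
  · linear_combination (-(γ-1) * n 2) * hR0 + ((γ-1) * n 0) * hR2 + (γ - γ*β - 1) * hS1
  · linear_combination (-(γ-1) * n 2) * hR1 + ((γ-1) * n 1) * hR2 - (γ - γ*β - 1) * hS0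
  · ring
end
end
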